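/- Let G be a group, Z its centre, σ : ℝ → Aut(G) a homomorphism fixing Z pointwise, u : ℝ → G a σ-cocycle (u(s+t) = u(t)σ_t(u(s))), and λ : ℝ → Z a homomorphism such that u(s+t) = λ(st)·u(t)·u(s) for all s,t ∈ ℝ. Then v(t) := λ(t²/2)⁻¹·u(t) defines a group homomorphism from (ℝ,+) to G, i.e., v(s+t) = v(s)·v(t). -/
import Mathlib


theorem one_parameter_group_from_cocycle {G : Type*} [Group G]
    (σ : ℝ → MulAut G) (hσ : ∀ s t : ℝ, σ (s + t) = σ s * σ t)
    (hfix : ∀ (t : ℝ) (z : G), z ∈ Subgroup.center G → σ t z = z)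
    (u : ℝ → G) (hu : ∀ s t : ℝ, u (s + t) = u t * σ t (u s))
    (lam : ℝ → G) (hlZ : ∀ t : ℝ, lam t ∈ Subgroup.center G)
    (hlhom : ∀ s t : ℝ, lam (s + t) = lam s * lam t)
    (hul : ∀ s t : ℝ, u (s + t) = lam (s * t) * (u t * u s))
    (v : ℝ → G) (hv : ∀ t : ℝ, v t = (lam (t ^ 2 / 2))⁻¹ * u t) :
    ∀ s t : ℝ, v (s + t) = v s * v t := by
  intro s t
  have hcomm : ∀ (a : ℝ) (g : G), Commute (lam a) g :=
    fun a g => (Subgroup.mem_center_iff.mp (hlZ a) g).symm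
  have key : lam ((s + t) ^ 2 / 2) = lam (s * t) * (lam (s ^ 2 / 2) * lam (t ^ 2 / 2)) := by
    rw [← hlhom, ← hlhom]; ring_nf
  have hus : u (s + t) = lam (s * t) * (u s * u t) := by
    rw [add_comm s t, hul t s, mul_comm t s]
  rw [hv, hv, hv, key, hus]
  have h1 : Commute (lam (t ^ 2 / 2))⁻¹ (u s) := (hcomm _ _).inv_left
  calc (lam (s * t) * (lam (s ^ 2 / 2) * lam (t ^ 2 / 2)))⁻¹ * (lam (s * t) * (u s * u t))
      = (lam (s ^ 2 / 2) * lam (t ^ 2 / 2))⁻¹ * ((lam (s * t))⁻¹ * (lam (s * t) * (u s * u t))) := by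
        rw [mul_inv_rev]; group
    _ = (lam (t ^ 2 / 2))⁻¹ * (lam (s ^ 2 / 2))⁻¹ * (u s * u t) := by
        rw [inv_mul_cancel_left, mul_inv_rev]
    _ = (lam (s ^ 2 / 2))⁻¹ * (lam (t ^ 2 / 2))⁻¹ * (u s * u t) := by
        rw [((hcomm _ _).inv_left.inv_right).eq]
    _ = (lam (s ^ 2 / 2))⁻¹ * u s * ((lam (t ^ 2 / 2))⁻¹ * u t) := by
        rw [mul_assoc, mul_assoc, ← mul_assoc (lam (t ^ 2 / 2))⁻¹, h1.eq, mul_assoc]
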